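/- Assume M_j is reversible with respect to Π_j with ‖Π_{j-1}/Π_j‖_∞ < ∞. Let f_{j-1} ∈ L²(Π_{j-1}) be a probability density with respect to Π_{j-1} (so Π_{j-1}(f_{j-1}) = 1) and let f_j = M̄_j f_{j-1}. Then Var_j(f_j) = Var_{j-1}(f_{j-1}) − ⟨f_{j-1}, (I − Q_j) f_{j-1}⟩_{j-1}, where I is the identity operator. -/

import Mathlib

open MeasureTheory ProbabilityTheory
open scoped ENNReal

/-- Reversibility of a kernel `M` with respect to a measure `π` (detailed balance). -/
def IsReversible {Θ : Type*} [MeasurableSpace Θ] (M : Kernel Θ Θ) (π : Measure Θ) : Prop :=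
  ∀ A B : Set Θ, MeasurableSet A → MeasurableSet B →
    ∫⁻ x in A, M x B ∂π = ∫⁻ x in B, M x A ∂π

/-- `M̄ f(u) = ∫ M(u,dv) f(v) r(v)`, where `r = Π_{j-1}/Π_j` is the density ratio. -/
noncomputable def mbar {Θ : Type*} [MeasurableSpace Θ] (M : Kernel Θ Θ) (r : Θ → ℝ)
    (f : Θ → ℝ) (u : Θ) : ℝ :=
  ∫ v, f v * r v ∂(M u)

/-- The operator `Q f(x) = ∫ M(x,dy) ∫ M(y,dz) f(z) r(z)`, i.e. `Q = M ∘ M̄`. -/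
noncomputable def Qop {Θ : Type*} [MeasurableSpace Θ] (M : Kernel Θ Θ) (r : Θ → ℝ)
    (f : Θ → ℝ) (x : Θ) : ℝ :=
  ∫ y, (∫ z, f z * r z ∂(M y)) ∂(M x)

/-- `Var_π(f) = π(f²) − π(f)²`. -/
noncomputable def varI {Θ : Type*} [MeasurableSpace Θ] (π : Measure Θ) (f : Θ → ℝ) : ℝ :=
  (∫ x, (f x) ^ 2 ∂π) - (∫ x, f x ∂π) ^ 2

section aux
variable {Θ : Type*} [MeasurableSpace Θ] {π : Measure Θ} [IsProbabilityMeasure π]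
  {M : Kernel Θ Θ} [IsMarkovKernel M]

lemma invariant_lintegral (hrev : IsReversible M π) {φ : Θ → ℝ≥0∞} (hφ : Measurable φ) :
    ∫⁻ x, ∫⁻ y, φ y ∂(M x) ∂π = ∫⁻ x, φ x ∂π := by
  have hbind : π.bind M = π := by
    ext A hA
    rw [Measure.bind_apply hA (Kernel.measurable M).aemeasurable]
    have h := hrev A Set.univ hA MeasurableSet.univ
    simp only [measure_univ, setLIntegral_one, Measure.restrict_univ] at h
    rw [← h]
  conv_rhs => rw [← hbind]
  rw [Measure.lintegral_bind (Kernel.measurable M).aemeasurable hφ.aemeasurable]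

lemma symm_lintegral (hrev : IsReversible M π) {φ ψ : Θ → ℝ≥0∞}
    (hφ : Measurable φ) (hψ : Measurable ψ) :
    ∫⁻ x, φ x * ∫⁻ y, ψ y ∂(M x) ∂π = ∫⁻ x, ψ x * ∫⁻ y, φ y ∂(M x) ∂π := by
  have hswap : (π ⊗ₘ M).map Prod.swap = π ⊗ₘ M := by
    refine ext_of_generate_finite _ generateFrom_prod.symm isPiSystem_prod ?_ ?_
    · rintro s ⟨A, hA, B, hB, rfl⟩
      rw [Measure.map_apply measurable_swap ((hA : MeasurableSet A).prod hB),
        Set.preimage_swap_prod, Measure.compProd_apply_prod hB hA,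
        Measure.compProd_apply_prod hA hB, hrev A B hA hB]
    · rw [Measure.map_apply measurable_swap MeasurableSet.univ]
      simp
  have hm1 : Measurable fun p : Θ × Θ => φ p.1 * ψ p.2 :=
    (hφ.comp measurable_fst).mul (hψ.comp measurable_snd)
  have hm2 : Measurable fun p : Θ × Θ => φ p.2 * ψ p.1 :=
    (hφ.comp measurable_snd).mul (hψ.comp measurable_fst)
  calc ∫⁻ x, φ x * ∫⁻ y, ψ y ∂(M x) ∂π
      = ∫⁻ p, φ p.1 * ψ p.2 ∂(π ⊗ₘ M) := by
        rw [Measure.lintegral_compProd hm1]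
        refine lintegral_congr fun x => ?_
        simp only []
        rw [lintegral_const_mul _ hψ]
    _ = ∫⁻ p, φ p.2 * ψ p.1 ∂(π ⊗ₘ M) := by
        conv_lhs => rw [← hswap]
        rw [lintegral_map hm1 measurable_swap]
        rfl
    _ = ∫⁻ x, ψ x * ∫⁻ y, φ y ∂(M x) ∂π := by
        rw [Measure.lintegral_compProd hm2]
        refine lintegral_congr fun x => ?_
        simp only []
        rw [lintegral_mul_const _ hφ, mul_comm]

end aux

theorem variance_identity
    {Θ : Type*} [MeasurableSpace Θ]
    (πprev πcur : Measure Θ)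
    (hπprev : IsProbabilityMeasure πprev) (hπcur : IsProbabilityMeasure πcur)
    (M : Kernel Θ Θ) (hM : IsMarkovKernel M)
    (hrev : IsReversible M πcur)
    (r : Θ → ℝ) (hrmeas : Measurable r) (hrnonneg : ∀ z, 0 ≤ r z)
    (hdens : πprev = πcur.withDensity (fun z => ENNReal.ofReal (r z)))
    (ρ : ℝ) (hρ : ∀ z, r z ≤ ρ)
    (f : Θ → ℝ) (hfmeas : Measurable f) (hfnonneg : ∀ x, 0 ≤ f x)
    (hfL2 : Integrable (fun x => (f x) ^ 2) πprev)
    (hfdens : (∫ x, f x ∂πprev) = 1) :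
    varI πcur (mbar M r f) =
      varI πprev f - ∫ x, f x * (f x - Qop M r f x) ∂πprev := by
  haveI := hπprev; haveI := hπcur; haveI := hM
  set g : Θ → ℝ≥0∞ := fun v => ENNReal.ofReal (f v * r v) with hgdef
  have hg : Measurable g := (hfmeas.mul hrmeas).ennreal_ofReal
  set L : Θ → ℝ≥0∞ := fun u => ∫⁻ v, g v ∂(M u) with hLdef
  have hL : Measurable L := hg.lintegral_kernel
  set K : Θ → ℝ≥0∞ := fun x => ∫⁻ y, L y ∂(M x) with hKdef
  have hK : Measurable K := hL.lintegral_kernel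
  -- lintegrals over πprev as lintegrals over πcur
  have hprev_lint : ∀ {h : Θ → ℝ≥0∞}, Measurable h →
      ∫⁻ x, h x ∂πprev = ∫⁻ x, ENNReal.ofReal (r x) * h x ∂πcur := by
    intro h hh
    rw [hdens, lintegral_withDensity_eq_lintegral_mul _ hrmeas.ennreal_ofReal hh]
    rfl
  -- f is integrable
  have hf_int : Integrable f πprev := by
    have hbint : Integrable (fun x => (f x ^ 2 + 1) / 2) πprev := by
      have h := (hfL2.add (integrable_const 1)).div_const 2
      simpa using h
    refine Integrable.mono' hbint
      hfmeas.aestronglyMeasurable (Filter.Eventually.of_forall fun x => ?_)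
    rw [Real.norm_eq_abs, abs_of_nonneg (hfnonneg x)]
    nlinarith [sq_nonneg (f x - 1)]
  have hgr : ∀ x, g x = ENNReal.ofReal (r x) * ENNReal.ofReal (f x) := by
    intro x
    show ENNReal.ofReal (f x * r x) = _
    rw [ENNReal.ofReal_mul (hfnonneg x), mul_comm]
  have hone : ∫⁻ x, g x ∂πcur = 1 := by
    have h1 : ∫⁻ x, ENNReal.ofReal (f x) ∂πprev = 1 := by
      rw [← ofReal_integral_eq_lintegral_ofReal hf_int
        (Filter.Eventually.of_forall hfnonneg), hfdens, ENNReal.ofReal_one]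
    rw [hprev_lint hfmeas.ennreal_ofReal] at h1
    rw [← h1]
    exact lintegral_congr fun x => hgr x
  have hLint : ∫⁻ x, L x ∂πcur = 1 := (invariant_lintegral hrev hg).trans hone
  have hLfin : ∀ᵐ x ∂πcur, L x < ⊤ := ae_lt_top hL (by rw [hLint]; exact ENNReal.one_ne_top)
  have hmbar : ∀ u, mbar M r f u = (L u).toReal := by
    intro u
    rw [mbar, integral_eq_lintegral_of_nonneg_ae
      (Filter.Eventually.of_forall fun v => mul_nonneg (hfnonneg v) (hrnonneg v))
      (hfmeas.mul hrmeas).aestronglyMeasurable]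
  have hI1 : ∫ x, mbar M r f x ∂πcur = 1 := by
    have h2 : ∫ x, mbar M r f x ∂πcur = ∫ x, (L x).toReal ∂πcur := by
      simp only [hmbar]
    rw [h2, integral_toReal hL.aemeasurable hLfin, hLint, ENNReal.toReal_one]
  -- the key second-moment quantity
  set S : ℝ≥0∞ := ∫⁻ x, L x * L x ∂πcur with hSdef
  have hSK : S = ∫⁻ x, g x * K x ∂πcur := symm_lintegral hrev hL hg
  -- finiteness of S
  have hg2fin : ∫⁻ x, g x * g x ∂πcur ≠ ⊤ := by
    have hb : ∀ x, g x * g x ≤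
        ENNReal.ofReal ρ * (ENNReal.ofReal (r x) * ENNReal.ofReal (f x ^ 2)) := by
      intro x
      show ENNReal.ofReal (f x * r x) * ENNReal.ofReal (f x * r x) ≤ _
      rw [← ENNReal.ofReal_mul (mul_nonneg (hfnonneg x) (hrnonneg x)),
        ← ENNReal.ofReal_mul (hrnonneg x), ← ENNReal.ofReal_mul (le_trans (hrnonneg x) (hρ x))]
      apply ENNReal.ofReal_le_ofReal
      have hrr : r x * r x ≤ ρ * r x := mul_le_mul_of_nonneg_right (hρ x) (hrnonneg x)
      nlinarith [hrr, sq_nonneg (f x), hfnonneg x]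
    have hle : ∫⁻ x, g x * g x ∂πcur ≤
        ENNReal.ofReal ρ * ENNReal.ofReal (∫ x, f x ^ 2 ∂πprev) := by
      calc ∫⁻ x, g x * g x ∂πcur
          ≤ ∫⁻ x, ENNReal.ofReal ρ * (ENNReal.ofReal (r x) * ENNReal.ofReal (f x ^ 2)) ∂πcur :=
            lintegral_mono hb
        _ = ENNReal.ofReal ρ * ∫⁻ x, ENNReal.ofReal (r x) * ENNReal.ofReal (f x ^ 2) ∂πcur :=
            lintegral_const_mul _ (hrmeas.ennreal_ofReal.mul (hfmeas.pow_const 2).ennreal_ofReal)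
        _ = ENNReal.ofReal ρ * ∫⁻ x, ENNReal.ofReal (f x ^ 2) ∂πprev := by
            rw [hprev_lint (hfmeas.pow_const 2).ennreal_ofReal]
        _ = ENNReal.ofReal ρ * ENNReal.ofReal (∫ x, f x ^ 2 ∂πprev) := by
            rw [ofReal_integral_eq_lintegral_ofReal hfL2
              (Filter.Eventually.of_forall fun x => sq_nonneg (f x))]
    exact ne_top_of_le_ne_top (ENNReal.mul_ne_top ENNReal.ofReal_ne_top ENNReal.ofReal_ne_top) hle
  have hCS : ∀ x, L x * L x ≤ ∫⁻ v, g v * g v ∂(M x) := by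
    intro x
    have hconj : Real.HolderConjugate 2 2 := ⟨by norm_num, by norm_num, by norm_num⟩
    have h1 : L x ≤ (∫⁻ v, g v * g v ∂(M x)) ^ (1 / 2 : ℝ) := by
      have h2 := ENNReal.lintegral_mul_le_Lp_mul_Lq (M x) hconj hg.aemeasurable
        (aemeasurable_const (b := (1 : ℝ≥0∞)))
      simp only [Pi.mul_apply, mul_one, ENNReal.one_rpow, lintegral_one, measure_univ,
        ENNReal.one_rpow] at h2
      refine le_trans h2 (le_of_eq ?_)
      congr 1
      refine lintegral_congr fun v => ?_
      rw [show ((2 : ℝ) = ((2 : ℕ) : ℝ)) by norm_num, ENNReal.rpow_natCast, sq]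
    calc L x * L x ≤ (∫⁻ v, g v * g v ∂(M x)) ^ (1 / 2 : ℝ) *
          (∫⁻ v, g v * g v ∂(M x)) ^ (1 / 2 : ℝ) := mul_le_mul' h1 h1
      _ = ∫⁻ v, g v * g v ∂(M x) := by
          rw [← ENNReal.rpow_add_of_nonneg _ _ (by norm_num) (by norm_num)]
          norm_num
  have hSfin : S ≠ ⊤ := by
    refine ne_top_of_le_ne_top ?_ (lintegral_mono hCS)
    rw [invariant_lintegral hrev (φ := fun v => g v * g v) (hg.mul hg)]
    exact hg2fin
  -- second moment of mbar
  have hI2 : ∫ x, (mbar M r f x) ^ 2 ∂πcur = S.toReal := by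
    have h2 : ∫ x, (mbar M r f x) ^ 2 ∂πcur = ∫ x, (L x * L x).toReal ∂πcur := by
      refine integral_congr_ae (Filter.Eventually.of_forall fun x => ?_)
      show mbar M r f x ^ 2 = (L x * L x).toReal
      rw [hmbar, ENNReal.toReal_mul, sq]
    rw [h2, integral_toReal (f := fun x => L x * L x) ((hL.mul hL).aemeasurable) ?_]
    · filter_upwards [hLfin] with x hx
      exact ENNReal.mul_lt_top hx hx
  -- Qop equals K a.e.
  have hNnull : ∀ᵐ x ∂πcur, (M x) {u | L u = ⊤} = 0 := by
    have hNmeas : MeasurableSet {u | L u = ⊤} := hL (measurableSet_singleton ⊤)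
    have h0 : ∫⁻ x, (M x) {u | L u = ⊤} ∂πcur = 0 := by
      have hind := invariant_lintegral hrev (φ := Set.indicator {u | L u = ⊤} 1)
        (measurable_one.indicator hNmeas)
      simp only [lintegral_indicator_one hNmeas] at hind
      rw [hind]
      have h00 : πcur {u | L u = ⊤} = 0 := by
        refine measure_mono_null (fun u hu => ?_) (ae_iff.mp hLfin)
        simp only [Set.mem_setOf_eq] at hu ⊢
        simp [hu]
      rw [h00]
    have := (lintegral_eq_zero_iff (Kernel.measurable_coe M hNmeas)).mp h0
    exact this
  have hQK : ∀ᵐ x ∂πcur, Qop M r f x = (K x).toReal := by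
    filter_upwards [hNnull] with x hx
    have h1 : Qop M r f x = ∫ y, (L y).toReal ∂(M x) := by
      rw [Qop]
      exact integral_congr_ae (Filter.Eventually.of_forall fun y => hmbar y)
    have hae : ∀ᵐ y ∂(M x), L y < ⊤ := by
      rw [ae_iff]
      refine measure_mono_null (t := {u | L u = ⊤}) (fun u hu => ?_) hx
      simp only [Set.mem_setOf_eq, not_lt, top_le_iff] at hu ⊢
      exact hu
    rw [h1, integral_toReal hL.aemeasurable hae]
  -- transfer to πprev
  have hprev_ac : πprev ≪ πcur := hdens ▸ withDensity_absolutelyContinuous _ _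
  have hQKprev : ∀ᵐ x ∂πprev, Qop M r f x = (K x).toReal := hprev_ac.ae_le hQK
  have hgKae : ∀ᵐ x ∂πcur, g x * ENNReal.ofReal ((K x).toReal) = g x * K x := by
    have hfinKg : ∀ᵐ x ∂πcur, g x * K x < ⊤ :=
      ae_lt_top (hg.mul hK) (by rw [← hSK]; exact hSfin)
    filter_upwards [hfinKg] with x hx
    by_cases hKx : K x = ⊤
    · have hgx : g x = 0 := by
        by_contra hgx
        rw [hKx, ENNReal.mul_top hgx] at hx
        exact (lt_irrefl _ hx).elim
      simp [hgx]
    · rw [ENNReal.ofReal_toReal hKx]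
  have hWlint : ∫⁻ x, ENNReal.ofReal (f x * (K x).toReal) ∂πprev = S := by
    have hWmeas : Measurable fun x => ENNReal.ofReal (f x * (K x).toReal) :=
      (hfmeas.mul hK.ennreal_toReal).ennreal_ofReal
    rw [hprev_lint hWmeas, hSK]
    refine lintegral_congr_ae ?_
    filter_upwards [hgKae] with x hx
    rw [ENNReal.ofReal_mul (hfnonneg x), ← mul_assoc, ← hgr x, hx]
  have hWint : Integrable (fun x => f x * (K x).toReal) πprev := by
    refine ⟨(hfmeas.mul hK.ennreal_toReal).aestronglyMeasurable, ?_⟩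
    rw [hasFiniteIntegral_iff_ofReal (Filter.Eventually.of_forall fun x =>
      mul_nonneg (hfnonneg x) ENNReal.toReal_nonneg), hWlint]
    exact hSfin.lt_top
  have hQint : Integrable (fun x => f x * Qop M r f x) πprev := by
    refine hWint.congr ?_
    filter_upwards [hQKprev] with x hx
    rw [hx]
  have hT : ∫ x, f x * Qop M r f x ∂πprev = S.toReal := by
    have h1 : ∫ x, f x * Qop M r f x ∂πprev = ∫ x, f x * (K x).toReal ∂πprev :=
      integral_congr_ae (by filter_upwards [hQKprev] with x hx; rw [hx])
    rw [h1, integral_eq_lintegral_of_nonneg_ae (Filter.Eventually.of_forall fun x =>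
      mul_nonneg (hfnonneg x) ENNReal.toReal_nonneg)
      (hfmeas.mul hK.ennreal_toReal).aestronglyMeasurable, hWlint]
  have hsub : ∫ x, f x * (f x - Qop M r f x) ∂πprev = (∫ x, f x ^ 2 ∂πprev) - S.toReal := by
    have heq : (fun x => f x * (f x - Qop M r f x)) =
        fun x => f x ^ 2 - f x * Qop M r f x := by funext x; ring
    rw [heq, integral_sub hfL2 hQint, hT]
  simp only [varI]
  rw [hI1, hI2, hfdens, hsub]
  ring
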